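/- For every R > 0 the equation (e^ℓ + 1)/(e^ℓ − 1) = √((1 + e^{3R})/(e^R + e^{2R})) has a unique solution ℓ = ℓ(R) > 0, and exp((R/2)·ℓ(R)) tends to 1 as R → ∞. -/

import Mathlib

open Filter

noncomputable def sfun (R : ℝ) : ℝ :=
  Real.sqrt ((1 + Real.exp (3 * R)) / (Real.exp R + Real.exp (2 * R)))

noncomputable def lfun (R : ℝ) : ℝ := Real.log ((sfun R + 1) / (sfun R - 1))

lemma one_lt_sfun {R : ℝ} (hR : 0 < R) : 1 < sfun R := by
  have h1 : (1:ℝ) < Real.exp R := Real.one_lt_exp_iff.mpr hR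
  have h2 : (1:ℝ) < Real.exp (2*R) := Real.one_lt_exp_iff.mpr (by linarith)
  have hd : (0:ℝ) < Real.exp R + Real.exp (2*R) := by positivity
  have harg : (1:ℝ) < (1 + Real.exp (3 * R)) / (Real.exp R + Real.exp (2 * R)) := by
    rw [lt_div_iff₀ hd]
    have h3 : Real.exp (3*R) = Real.exp R * Real.exp (2*R) := by
      rw [← Real.exp_add]; ring_nf
    nlinarith
  have := Real.lt_sqrt (x := 1) (y := (1 + Real.exp (3 * R)) / (Real.exp R + Real.exp (2 * R))) (by norm_num)
  rw [sfun]
  rw [this]; nlinarith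

lemma sfun_lower {R : ℝ} (hR : 4 ≤ R) : Real.exp (R/2) / 2 ≤ sfun R - 1 := by
  have hd : (0:ℝ) < Real.exp R + Real.exp (2*R) := by positivity
  have hE : Real.exp R ≤ Real.exp (2*R) := Real.exp_le_exp.mpr (by linarith)
  have key : Real.exp R / 2 ≤ (1 + Real.exp (3 * R)) / (Real.exp R + Real.exp (2 * R)) := by
    rw [div_le_div_iff₀ (by norm_num) hd]
    have h3 : Real.exp (3*R) = Real.exp R * Real.exp (2*R) := by
      rw [← Real.exp_add]; ring_nf
    nlinarith [Real.exp_pos R, Real.exp_pos (2*R)]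
  have h1 : Real.sqrt (Real.exp R / 2) ≤ sfun R := Real.sqrt_le_sqrt key
  have h2 : Real.exp (R/2) * Real.exp (R/2) = Real.exp R := by
    rw [← Real.exp_add]; ring_nf
  have hEp := Real.exp_pos (R/2)
  have h4 : Real.exp 2 ≤ Real.exp (R/2) := Real.exp_le_exp.mpr (by linarith)
  have h5 : (6:ℝ) ≤ Real.exp 2 := by
    have := Real.exp_one_gt_d9
    have : Real.exp 2 = Real.exp 1 * Real.exp 1 := by rw [← Real.exp_add]; norm_num
    nlinarith [Real.exp_one_gt_d9]
  -- sqrt(exp R / 2) ≥ (2/3) exp(R/2)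
  have h6 : (2/3 : ℝ) * Real.exp (R/2) ≤ Real.sqrt (Real.exp R / 2) := by
    rw [show Real.exp R / 2 = (Real.exp (R/2))^2 / 2 by rw [sq]; rw [h2]]
    rw [Real.le_sqrt (by positivity) (by positivity)]
    nlinarith
  nlinarith

lemma exp_lfun {R : ℝ} (hR : 0 < R) :
    Real.exp (lfun R) = (sfun R + 1) / (sfun R - 1) := by
  have hs := one_lt_sfun hR
  exact Real.exp_log (by apply div_pos <;> linarith)

lemma lfun_pos {R : ℝ} (hR : 0 < R) : 0 < lfun R := by
  have hs := one_lt_sfun hR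
  apply Real.log_pos
  rw [lt_div_iff₀ (by linarith)]; linarith

lemma lfun_eq {R : ℝ} (hR : 0 < R) :
    (Real.exp (lfun R) + 1) / (Real.exp (lfun R) - 1) = sfun R := by
  have hs := one_lt_sfun hR
  rw [exp_lfun hR]
  have h1 : sfun R - 1 ≠ 0 := by linarith
  field_simp
  ring

lemma lfun_uniq {R : ℝ} (hR : 0 < R) (l : ℝ) (hl : 0 < l)
    (h : (Real.exp l + 1) / (Real.exp l - 1) = sfun R) : l = lfun R := by
  have hs := one_lt_sfun hR
  have he : 1 < Real.exp l := Real.one_lt_exp_iff.mpr hl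
  have he1 : Real.exp l - 1 ≠ 0 := by linarith
  rw [div_eq_iff he1] at h
  have : Real.exp l = (sfun R + 1) / (sfun R - 1) := by
    rw [eq_div_iff (by linarith : sfun R - 1 ≠ 0)]
    nlinarith
  have := this.trans (exp_lfun hR).symm
  exact Real.exp_injective this

lemma key_tendsto : Tendsto (fun R : ℝ => R / 2 * lfun R) atTop (nhds 0) := by
  have hg : Tendsto (fun R : ℝ => 4 * (R / 2 * Real.exp (-(R / 2)))) atTop (nhds 0) := by
    have h1 : Tendsto (fun x : ℝ => x * Real.exp (-x)) atTop (nhds 0) := by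
      simpa using Real.tendsto_pow_mul_exp_neg_atTop_nhds_zero 1
    have h2 : Tendsto (fun R : ℝ => R / 2) atTop atTop :=
      tendsto_id.atTop_div_const (by norm_num)
    have := (h1.comp h2).const_mul (4:ℝ)
    simpa using this
  apply squeeze_zero' (g := fun R : ℝ => 4 * (R / 2 * Real.exp (-(R / 2))))
  · filter_upwards [eventually_ge_atTop (4:ℝ)] with R hR
    have := lfun_pos (by linarith : (0:ℝ) < R)
    positivity
  · filter_upwards [eventually_ge_atTop (4:ℝ)] with R hR
    have hR0 : (0:ℝ) < R := by linarith
    have hs := one_lt_sfun hR0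
    have hlow := sfun_lower hR
    have hEp := Real.exp_pos (R/2)
    have hlog : lfun R ≤ 2 / (sfun R - 1) := by
      have := Real.log_le_sub_one_of_pos
        (show (0:ℝ) < (sfun R + 1)/(sfun R - 1) by apply div_pos <;> linarith)
      calc lfun R ≤ (sfun R + 1)/(sfun R - 1) - 1 := this
        _ = 2 / (sfun R - 1) := by
            rw [div_sub_one (by linarith : sfun R - 1 ≠ 0)]
            congr 1; ring
    have h2 : 2 / (sfun R - 1) ≤ 4 * Real.exp (-(R/2)) := by
      rw [Real.exp_neg]
      rw [div_le_iff₀ (by linarith)]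
      rw [← sub_nonneg]
      have : 4 * (Real.exp (R/2))⁻¹ * (sfun R - 1) - 2
          = 4 * (Real.exp (R/2))⁻¹ * ((sfun R - 1) - Real.exp (R/2)/2) := by
        field_simp
        ring
      rw [this]
      have : 0 ≤ (sfun R - 1) - Real.exp (R/2)/2 := by linarith
      positivity
    have hl := hlog.trans h2
    calc R / 2 * lfun R ≤ R / 2 * (4 * Real.exp (-(R/2))) := by
          apply mul_le_mul_of_nonneg_left hl (by linarith)
      _ = 4 * (R / 2 * Real.exp (-(R / 2))) := by ring
  exact hg


/-- Proposition 15.1.6(ii), as a real-analysis claim: for every `R > 0` the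
equation `(e^ℓ + 1)/(e^ℓ − 1) = √((1 + e^{3R})/(e^R + e^{2R}))` has a unique
positive solution `ℓ(R)`, and `exp((R/2)·ℓ(R)) → 1` as `R → ∞`. -/
theorem stmt16 :
    ∃ ℓ : ℝ → ℝ,
      (∀ R : ℝ, 0 < R →
        (0 < ℓ R ∧
          (Real.exp (ℓ R) + 1) / (Real.exp (ℓ R) - 1) =
            Real.sqrt ((1 + Real.exp (3 * R)) / (Real.exp R + Real.exp (2 * R)))) ∧
        ∀ l : ℝ, 0 < l →
          (Real.exp l + 1) / (Real.exp l - 1) =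
            Real.sqrt ((1 + Real.exp (3 * R)) / (Real.exp R + Real.exp (2 * R))) →
          l = ℓ R) ∧
      Tendsto (fun R : ℝ => Real.exp (R / 2 * ℓ R)) atTop (nhds 1) := by
  refine ⟨lfun, fun R hR => ⟨⟨lfun_pos hR, lfun_eq hR⟩, fun l hl h => lfun_uniq hR l hl h⟩, ?_⟩
  have := (Real.continuous_exp.tendsto 0).comp key_tendsto
  simpa [Function.comp_def] using this
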